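/- Let M be an ℝ-tree and let A, B, C be nonempty subsets of M. For a nonempty subset S ⊆ M, let Ē_S denote the smallest closed subtree of M containing S. Suppose that for every a ∈ A, the nearest point to a in Ē_{B∪C} lies in Ē_C (equivalently, dist(a, Ē_{B∪C}) = dist(a, Ē_C)). Then for every b ∈ B, the nearest point to b in Ē_{A∪C} lies in Ē_C (equivalently, dist(b, Ē_{A∪C}) = dist(b, Ē_C)). -/

import Mathlib

open Set Metric

/-- A geodesic segment in a metric space: the image of an isometric embedding of a
closed real interval `[0, ℓ]`, going from `a` to `b`. -/
def IsGeodesicSegmentFromTo {M : Type*} [MetricSpace M] (s : Set M) (a b : M) : Prop :=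
  ∃ ℓ : ℝ, 0 ≤ ℓ ∧ ∃ γ : ℝ → M,
    (∀ u ∈ Set.Icc (0:ℝ) ℓ, ∀ v ∈ Set.Icc (0:ℝ) ℓ, dist (γ u) (γ v) = |u - v|) ∧
    γ 0 = a ∧ γ ℓ = b ∧ s = γ '' Set.Icc 0 ℓ

/-- An arc from `a` to `b`: the (injective, continuous) image of a closed real
interval `[0, ℓ]`; a single point when `a = b`. -/
def IsArcFromTo {M : Type*} [MetricSpace M] (s : Set M) (a b : M) : Prop :=
  ∃ ℓ : ℝ, 0 ≤ ℓ ∧ ∃ γ : ℝ → M,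
    ContinuousOn γ (Set.Icc 0 ℓ) ∧ Set.InjOn γ (Set.Icc 0 ℓ) ∧
    γ 0 = a ∧ γ ℓ = b ∧ s = γ '' Set.Icc 0 ℓ

/-- An ℝ-tree: a metric space in which any two points are joined by a unique arc,
and that arc is a geodesic segment. -/
def IsRTree (M : Type*) [MetricSpace M] : Prop :=
  ∀ a b : M, ∃ s : Set M,
    IsArcFromTo s a b ∧ IsGeodesicSegmentFromTo s a b ∧
    ∀ t : Set M, IsArcFromTo t a b → t = s

/-- The geodesic segment `[a, b]` in an ℝ-tree: the unique arc from `a` to `b`. -/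
noncomputable def seg {M : Type*} [MetricSpace M] (h : IsRTree M) (a b : M) : Set M :=
  (h a b).choose

section API
variable {M : Type*} [MetricSpace M] (h : IsRTree M)

lemma isomLike_continuousOn {N : Type*} [MetricSpace N] {f : ℝ → N} {s : Set ℝ}
    (hf : ∀ u ∈ s, ∀ v ∈ s, dist (f u) (f v) = |u - v|) : ContinuousOn f s :=
  (LipschitzOnWith.of_dist_le_mul (K := 1) (fun u hu v hv => by
    rw [hf u hu v hv, Real.dist_eq]; simp)).continuousOn

lemma isomLike_injOn {N : Type*} [MetricSpace N] {f : ℝ → N} {s : Set ℝ}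
    (hf : ∀ u ∈ s, ∀ v ∈ s, dist (f u) (f v) = |u - v|) : Set.InjOn f s := by
  intro u hu v hv huv
  have := hf u hu v hv
  rw [huv, dist_self] at this
  have := abs_eq_zero.mp this.symm
  linarith

lemma seg_isArc (a b : M) : IsArcFromTo (seg h a b) a b := (h a b).choose_spec.1

lemma arc_eq {t : Set M} {a b : M} (ht : IsArcFromTo t a b) : t = seg h a b :=
  (h a b).choose_spec.2.2 t ht

lemma seg_param (a b : M) : ∃ γ : ℝ → M,
    (∀ u ∈ Icc (0:ℝ) (dist a b), ∀ v ∈ Icc (0:ℝ) (dist a b), dist (γ u) (γ v) = |u - v|) ∧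
    γ 0 = a ∧ γ (dist a b) = b ∧ seg h a b = γ '' Icc 0 (dist a b) := by
  obtain ⟨ℓ, hℓ, γ, hiso, h0, hl, him⟩ := (h a b).choose_spec.2.1
  have hd : dist a b = ℓ := by
    have := hiso 0 ⟨le_refl _, hℓ⟩ ℓ ⟨hℓ, le_refl _⟩
    rw [h0, hl] at this
    rw [this, zero_sub, abs_neg, abs_of_nonneg hℓ]
  exact ⟨γ, by rw [hd]; exact hiso, h0, by rw [hd]; exact hl, by rw [hd]; exact him⟩

lemma left_mem_seg (a b : M) : a ∈ seg h a b := by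
  obtain ⟨γ, hiso, h0, hl, him⟩ := seg_param h a b
  rw [him]; exact ⟨0, ⟨le_refl _, dist_nonneg⟩, h0⟩

lemma right_mem_seg (a b : M) : b ∈ seg h a b := by
  obtain ⟨γ, hiso, h0, hl, him⟩ := seg_param h a b
  rw [him]; exact ⟨dist a b, ⟨dist_nonneg, le_refl _⟩, hl⟩

lemma dist_add_of_mem_seg {a b x : M} (hx : x ∈ seg h a b) :
    dist a x + dist x b = dist a b := by
  obtain ⟨γ, hiso, h0, hl, him⟩ := seg_param h a b
  rw [him] at hx
  obtain ⟨u, hu, rfl⟩ := hx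
  have h1 : dist a (γ u) = u := by
    rw [← h0, hiso 0 ⟨le_refl _, dist_nonneg⟩ u hu, zero_sub, abs_neg, abs_of_nonneg hu.1]
  have h2 := hiso u hu (dist a b) ⟨dist_nonneg, le_refl _⟩
  rw [hl] at h2
  rw [h1, h2, abs_of_nonpos (by linarith [hu.2]), neg_sub]
  ring

lemma seg_symm (a b : M) : seg h a b = seg h b a := by
  refine arc_eq h ?_
  obtain ⟨ℓ, hℓ, γ, hcont, hinj, h0, hl, him⟩ := seg_isArc h a b
  refine ⟨ℓ, hℓ, fun t => γ (ℓ - t), ?_, ?_, by simpa, by simpa, ?_⟩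
  · refine hcont.comp (by fun_prop) ?_
    intro t ht; exact ⟨by linarith [ht.2], by linarith [ht.1]⟩
  · intro u hu v hv huv
    have := hinj (⟨by linarith [hu.2], by linarith [hu.1]⟩ : ℓ - u ∈ Icc 0 ℓ)
      (⟨by linarith [hv.2], by linarith [hv.1]⟩ : ℓ - v ∈ Icc 0 ℓ) huv
    linarith
  · rw [him]
    ext x
    constructor
    · rintro ⟨u, hu, rfl⟩
      exact ⟨ℓ - u, ⟨by linarith [hu.2], by linarith [hu.1]⟩, by simp⟩
    · rintro ⟨u, hu, rfl⟩
      exact ⟨ℓ - u, ⟨by linarith [hu.2], by linarith [hu.1]⟩, rfl⟩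

/-- The `seg` between two image points of the parametrization (increasing order). -/
lemma seg_eq_image {γ : ℝ → M} {ℓ : ℝ}
    (hiso : ∀ u ∈ Icc (0:ℝ) ℓ, ∀ v ∈ Icc (0:ℝ) ℓ, dist (γ u) (γ v) = |u - v|)
    {u v : ℝ} (hu : u ∈ Icc (0:ℝ) ℓ) (hv : v ∈ Icc (0:ℝ) ℓ) (huv : u ≤ v) :
    seg h (γ u) (γ v) = γ '' Icc u v := by
  refine (arc_eq h ?_).symm
  have hsub : Icc u v ⊆ Icc 0 ℓ := Icc_subset_Icc hu.1 hv.2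
  have hmem : ∀ t ∈ Icc (0:ℝ) (v - u), u + t ∈ Icc 0 ℓ := fun t ht =>
    hsub ⟨by linarith [ht.1], by linarith [ht.2]⟩
  refine ⟨v - u, by linarith, fun t => γ (u + t), ?_, ?_, by simp, by simp, ?_⟩
  · exact (isomLike_continuousOn hiso).comp (by fun_prop) hmem
  · intro s hs t ht hst
    have := isomLike_injOn hiso (hmem s hs) (hmem t ht) hst
    linarith
  · ext x
    constructor
    · rintro ⟨t, ht, rfl⟩
      exact ⟨t - u, ⟨by linarith [ht.1], by linarith [ht.2]⟩, by show γ (u + (t - u)) = γ t; rw [add_sub_cancel]⟩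
    · rintro ⟨t, ht, rfl⟩
      exact ⟨u + t, ⟨by linarith [ht.1], by linarith [ht.2]⟩, rfl⟩

lemma seg_subset_seg {a b x y : M} (hx : x ∈ seg h a b) (hy : y ∈ seg h a b) :
    seg h x y ⊆ seg h a b := by
  obtain ⟨γ, hiso, h0, hl, him⟩ := seg_param h a b
  rw [him] at hx hy ⊢
  obtain ⟨u, hu, rfl⟩ := hx
  obtain ⟨v, hv, rfl⟩ := hy
  rcases le_total u v with huv | huv
  · rw [seg_eq_image h hiso hu hv huv]
    exact image_mono (Icc_subset_Icc hu.1 hv.2)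
  · rw [seg_symm h (γ u) (γ v), seg_eq_image h hiso hv hu huv]
    exact image_mono (Icc_subset_Icc hv.1 hu.2)

lemma seg_decomp {a b p : M} (hp : p ∈ seg h a b) :
    seg h a b = seg h a p ∪ seg h p b := by
  obtain ⟨γ, hiso, h0, hl, him⟩ := seg_param h a b
  have h0m : (0:ℝ) ∈ Icc (0:ℝ) (dist a b) := ⟨le_refl _, dist_nonneg⟩
  have hlm : dist a b ∈ Icc (0:ℝ) (dist a b) := ⟨dist_nonneg, le_refl _⟩
  rw [him] at hp
  obtain ⟨t, ht, rfl⟩ := hp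
  have e1 := seg_eq_image h hiso h0m ht ht.1
  rw [h0] at e1
  have e2 := seg_eq_image h hiso ht hlm ht.2
  rw [hl] at e2
  rw [him, e1, e2, ← image_union, Icc_union_Icc_eq_Icc ht.1 ht.2]

lemma seg_isClosed (a b : M) : IsClosed (seg h a b) := by
  obtain ⟨γ, hiso, h0, hl, him⟩ := seg_param h a b
  rw [him]
  exact (isCompact_Icc.image_of_continuousOn (isomLike_continuousOn hiso)).isClosed

end API

section API2
variable {M : Type*} [MetricSpace M] (h : IsRTree M)

lemma seg_glue {a m c : M} (hint : seg h a m ∩ seg h m c ⊆ {m}) :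
    seg h a c = seg h a m ∪ seg h m c := by
  refine (arc_eq h ?_).symm
  obtain ⟨ℓ₁, hℓ₁, γ₁, hc₁, hi₁, h10, h1l, him₁⟩ := seg_isArc h a m
  obtain ⟨ℓ₂, hℓ₂, γ₂, hc₂, hi₂, h20, h2l, him₂⟩ := seg_isArc h m c
  set δ : ℝ → M := fun t => if t ≤ ℓ₁ then γ₁ (max 0 t) else γ₂ (min (t - ℓ₁) ℓ₂) with hδ
  have hval₁ : ∀ t ∈ Icc (0:ℝ) ℓ₁, δ t = γ₁ t := by
    intro t ht; simp only [hδ]; rw [if_pos ht.2, max_eq_right ht.1]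
  have hval₂ : ∀ t, ℓ₁ < t → t ≤ ℓ₁ + ℓ₂ → δ t = γ₂ (t - ℓ₁) := by
    intro t ha hb; simp only [hδ]; rw [if_neg (not_le.mpr ha), min_eq_left (by linarith)]
  have hmem₁ : ∀ t ∈ Icc (0:ℝ) ℓ₁, γ₁ t ∈ seg h a m := by
    intro t ht; rw [him₁]; exact ⟨t, ht, rfl⟩
  have hmem₂ : ∀ t ∈ Icc (0:ℝ) ℓ₂, γ₂ t ∈ seg h m c := by
    intro t ht; rw [him₂]; exact ⟨t, ht, rfl⟩
  have hcont : Continuous δ := by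
    refine continuous_if_le continuous_id continuous_const ?_ ?_ ?_
    · refine hc₁.comp (continuous_const.max continuous_id).continuousOn ?_
      intro t ht
      exact ⟨le_max_left _ _, max_le hℓ₁ ht⟩
    · refine hc₂.comp ((continuous_id.sub continuous_const).min continuous_const).continuousOn ?_
      intro t ht
      simp only [mem_setOf_eq] at ht
      exact ⟨le_min (by simp; linarith) hℓ₂, min_le_right _ _⟩
    · intro t ht
      subst ht
      rw [max_eq_right hℓ₁, sub_self, min_eq_left hℓ₂, h1l, h20]
  have key : ∀ u v, u ∈ Icc (0:ℝ) (ℓ₁ + ℓ₂) → v ∈ Icc (0:ℝ) (ℓ₁ + ℓ₂) →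
      u ≤ ℓ₁ → ℓ₁ < v → δ u = δ v → False := by
    intro u v hu hv h1 h2 huv
    rw [hval₁ u ⟨hu.1, h1⟩, hval₂ v h2 hv.2] at huv
    have hx : γ₁ u ∈ seg h a m := hmem₁ u ⟨hu.1, h1⟩
    have hy : γ₂ (v - ℓ₁) ∈ seg h m c := hmem₂ _ ⟨by linarith, by linarith [hv.2]⟩
    have hm1 : γ₁ u = m := hint ⟨hx, huv ▸ hy⟩
    have hm2 : γ₂ (v - ℓ₁) = m := by rw [← huv, hm1]
    have hv0 : v - ℓ₁ = 0 :=
      hi₂ ⟨by linarith, by linarith [hv.2]⟩ ⟨le_refl _, hℓ₂⟩ (by rw [hm2, h20])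
    linarith
  refine ⟨ℓ₁ + ℓ₂, by linarith, δ, hcont.continuousOn, ?_, ?_, ?_, ?_⟩
  · intro u hu v hv huv
    by_cases h1 : u ≤ ℓ₁ <;> by_cases h2 : v ≤ ℓ₁
    · rw [hval₁ u ⟨hu.1, h1⟩, hval₁ v ⟨hv.1, h2⟩] at huv
      exact hi₁ ⟨hu.1, h1⟩ ⟨hv.1, h2⟩ huv
    · exact absurd huv (fun huv => key u v hu hv h1 (not_le.mp h2) huv)
    · exact absurd huv (fun huv => (key v u hv hu h2 (not_le.mp h1) huv.symm))
    · push_neg at h1 h2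
      rw [hval₂ u h1 hu.2, hval₂ v h2 hv.2] at huv
      have := hi₂ ⟨by linarith, by linarith [hu.2]⟩ ⟨by linarith, by linarith [hv.2]⟩ huv
      linarith
  · rw [hval₁ 0 ⟨le_refl _, hℓ₁⟩, h10]
  · rcases eq_or_lt_of_le hℓ₂ with h2 | h2
    · rw [show ℓ₁ + ℓ₂ = ℓ₁ by rw [← h2]; ring, hval₁ ℓ₁ ⟨hℓ₁, le_refl _⟩, h1l, ← h2l, ← h2, h20]
    · rw [hval₂ _ (by linarith) (le_refl _), add_sub_cancel_left, h2l]
  · ext x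
    constructor
    · rintro (hx | hx)
      · rw [him₁] at hx
        obtain ⟨t, ht, rfl⟩ := hx
        exact ⟨t, ⟨ht.1, by linarith [ht.2]⟩, hval₁ t ht⟩
      · rw [him₂] at hx
        obtain ⟨t, ht, rfl⟩ := hx
        rcases ht.1.eq_or_lt with h0 | h0
        · refine ⟨ℓ₁, ⟨hℓ₁, by linarith⟩, ?_⟩
          rw [hval₁ ℓ₁ ⟨hℓ₁, le_refl _⟩, h1l, ← h0, h20]
        · exact ⟨ℓ₁ + t, ⟨by linarith, by linarith [ht.2]⟩,
            by rw [hval₂ _ (by linarith) (by linarith [ht.2]), add_sub_cancel_left]⟩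
    · rintro ⟨t, ht, rfl⟩
      by_cases h1 : t ≤ ℓ₁
      · exact Or.inl (by rw [hval₁ t ⟨ht.1, h1⟩]; exact hmem₁ t ⟨ht.1, h1⟩)
      · push_neg at h1
        exact Or.inr (by rw [hval₂ t h1 ht.2]; exact hmem₂ _ ⟨by linarith, by linarith [ht.2]⟩)

lemma median (z a b : M) : ∃ m, m ∈ seg h z a ∧ m ∈ seg h z b ∧
    seg h a b = seg h a m ∪ seg h m b := by
  obtain ⟨γ, hiso, h0, hl, him⟩ := seg_param h z a
  set ℓ := dist z a with hldef
  set S := Icc 0 ℓ ∩ γ ⁻¹' (seg h z b) with hS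
  have hℓ0 : (0:ℝ) ≤ ℓ := dist_nonneg
  have hS0 : (0:ℝ) ∈ S := ⟨⟨le_refl _, hℓ0⟩, by rw [mem_preimage, h0]; exact left_mem_seg h z b⟩
  have hSc : IsClosed S :=
    (isomLike_continuousOn hiso).preimage_isClosed_of_isClosed isClosed_Icc (seg_isClosed h z b)
  have hSb : BddAbove S := BddAbove.mono inter_subset_left bddAbove_Icc
  set t₀ := sSup S with ht₀def
  have ht₀ : t₀ ∈ S := hSc.csSup_mem ⟨0, hS0⟩ hSb
  set m := γ t₀ with hm
  have hma : m ∈ seg h z a := by rw [him]; exact ⟨t₀, ht₀.1, rfl⟩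
  have hmb : m ∈ seg h z b := ht₀.2
  refine ⟨m, hma, hmb, seg_glue h ?_⟩
  rintro x ⟨hx1, hx2⟩
  have hxza : x ∈ seg h z a := seg_subset_seg h (right_mem_seg h z a) hma hx1
  rw [him] at hxza
  obtain ⟨s, hs, rfl⟩ := hxza
  have hxzb : γ s ∈ seg h z b := seg_subset_seg h hmb (right_mem_seg h z b) hx2
  have hsS : s ∈ S := ⟨hs, hxzb⟩
  have hsle : s ≤ t₀ := le_csSup hSb hsS
  have hd := dist_add_of_mem_seg h hx1
  have e1 : dist a (γ s) = ℓ - s := by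
    have := hiso ℓ ⟨hℓ0, le_refl _⟩ s hs
    rw [hl] at this
    rw [this, abs_of_nonneg (by linarith [hs.2])]
  have e2 : dist (γ s) m = |s - t₀| := hiso s hs t₀ ht₀.1
  have e3 : dist a m = ℓ - t₀ := by
    have := hiso ℓ ⟨hℓ0, le_refl _⟩ t₀ ht₀.1
    rw [hl] at this
    rw [hm, this, abs_of_nonneg (by linarith [ht₀.1.2])]
  rw [e1, e2, e3] at hd
  have h4 : t₀ - s ≤ |s - t₀| := by rw [abs_sub_comm]; exact le_abs_self _
  have : s = t₀ := by linarith
  rw [this]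
  rfl

lemma median_dist (z a b : M) : ∃ m, m ∈ seg h a b ∧
    2 * dist z m = dist z a + dist z b - dist a b := by
  obtain ⟨m, hma, hmb, hdec⟩ := median h z a b
  have h1 := dist_add_of_mem_seg h hma
  have h2 := dist_add_of_mem_seg h hmb
  have hm : m ∈ seg h a b := hdec ▸ Or.inl (right_mem_seg h a m)
  have h3 := dist_add_of_mem_seg h hm
  exact ⟨m, hm, by linarith [dist_comm m a, dist_comm m b, dist_comm z m]⟩

lemma seg_subset_union (z a b : M) : seg h a b ⊆ seg h z a ∪ seg h z b := by
  obtain ⟨m, hma, hmb, hdec⟩ := median h z a b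
  rw [hdec]
  exact union_subset_union (seg_subset_seg h (right_mem_seg h z a) hma)
    (seg_subset_seg h hmb (right_mem_seg h z b))

end API2

section API3
variable {M : Type*} [MetricSpace M] (h : IsRTree M)

lemma convex_of_isRTree {E : Set M} (hE : IsRTree ↥E) :
    ∀ x ∈ E, ∀ y ∈ E, seg h x y ⊆ E := by
  intro x hx y hy
  obtain ⟨s, hs, -, -⟩ := hE ⟨x, hx⟩ ⟨y, hy⟩
  obtain ⟨ℓ, hℓ, γ, hcont, hinj, h0, hl, him⟩ := hs
  have harc : IsArcFromTo (Subtype.val '' s) x y := by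
    refine ⟨ℓ, hℓ, fun t => (γ t : M), continuous_subtype_val.comp_continuousOn hcont,
      fun u hu v hv huv => hinj hu hv (Subtype.ext huv),
      by show ((γ 0 : ↥E) : M) = x; rw [h0], by show ((γ ℓ : ↥E) : M) = y; rw [hl], ?_⟩
    rw [him]
    exact image_image _ _ _
  rw [← arc_eq h harc]
  rintro p ⟨q, hq, rfl⟩
  exact q.2

lemma isRTree_of_closed_convex {E : Set M} (hcl : IsClosed E)
    (hconv : ∀ x ∈ E, ∀ y ∈ E, seg h x y ⊆ E) : IsRTree ↥E := by
  intro x y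
  obtain ⟨γ, hiso, h0, hl, him⟩ := seg_param h (x : M) (y : M)
  set ℓ := dist (x : M) (y : M) with hld
  have hℓ0 : (0:ℝ) ≤ ℓ := dist_nonneg
  have hsub : seg h (x : M) (y : M) ⊆ E := hconv _ x.2 _ y.2
  have hmem : ∀ t, γ (max 0 (min t ℓ)) ∈ E := by
    intro t
    apply hsub
    rw [him]
    exact ⟨_, ⟨le_max_left _ _, max_le hℓ0 (min_le_right _ _)⟩, rfl⟩
  set γ' : ℝ → ↥E := fun t => ⟨γ (max 0 (min t ℓ)), hmem t⟩ with hγ'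
  have hval : ∀ t ∈ Icc (0:ℝ) ℓ, (γ' t : M) = γ t := by
    intro t ht
    simp only [hγ']
    rw [min_eq_left ht.2, max_eq_right ht.1]
  have hiso' : ∀ u ∈ Icc (0:ℝ) ℓ, ∀ v ∈ Icc (0:ℝ) ℓ, dist (γ' u) (γ' v) = |u - v| := by
    intro u hu v hv
    rw [Subtype.dist_eq, hval u hu, hval v hv]
    exact hiso u hu v hv
  have he0 : γ' 0 = x := Subtype.ext (by rw [hval 0 ⟨le_refl _, hℓ0⟩, h0])
  have hel : γ' ℓ = y := Subtype.ext (by rw [hval ℓ ⟨hℓ0, le_refl _⟩, hl])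
  have harc : IsArcFromTo (γ' '' Icc 0 ℓ) x y :=
    ⟨ℓ, hℓ0, γ', isomLike_continuousOn hiso', isomLike_injOn hiso', he0, hel, rfl⟩
  refine ⟨γ' '' Icc 0 ℓ, harc, ⟨ℓ, hℓ0, γ', hiso', he0, hel, rfl⟩, ?_⟩
  intro t ht
  obtain ⟨ℓ₂, hℓ₂, δ, hcont, hinj, hd0, hdl, hdim⟩ := ht
  have harcM : IsArcFromTo (Subtype.val '' t) (x : M) (y : M) :=
    ⟨ℓ₂, hℓ₂, fun s => (δ s : M), continuous_subtype_val.comp_continuousOn hcont,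
      fun u hu v hv huv => hinj hu hv (Subtype.ext huv),
      by show ((δ 0 : ↥E) : M) = (x : M); rw [hd0], by show ((δ ℓ₂ : ↥E) : M) = (y : M); rw [hdl],
      by rw [hdim]; exact image_image _ _ _⟩
  have h1 : Subtype.val '' t = seg h (x : M) (y : M) := arc_eq h harcM
  have h2 : Subtype.val '' (γ' '' Icc 0 ℓ) = seg h (x : M) (y : M) := by
    rw [image_image, him]
    ext p
    constructor
    · rintro ⟨s, hs, rfl⟩
      exact ⟨s, hs, (hval s hs).symm⟩
    · rintro ⟨s, hs, rfl⟩
      exact ⟨s, hs, hval s hs⟩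
  exact (Set.image_injective.mpr Subtype.val_injective) (h1.trans h2.symm)

lemma closure_convex {E : Set M} (hconv : ∀ x ∈ E, ∀ y ∈ E, seg h x y ⊆ E) :
    ∀ x ∈ closure E, ∀ y ∈ closure E, seg h x y ⊆ closure E := by
  intro x hx y hy z hz
  rw [Metric.mem_closure_iff]
  intro ε hε
  obtain ⟨x', hx', hdx⟩ := Metric.mem_closure_iff.mp hx (ε/2) (by linarith)
  obtain ⟨y', hy', hdy⟩ := Metric.mem_closure_iff.mp hy (ε/2) (by linarith)
  obtain ⟨m, hm, hdm⟩ := median_dist h z x' y'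
  refine ⟨m, hconv x' hx' y' hy' hm, ?_⟩
  have h1 := dist_add_of_mem_seg h hz
  linarith [hdm, dist_triangle z x x', dist_triangle z y y', dist_triangle4 x x' y' y,
    dist_comm x z, dist_comm y z, dist_comm z x, dist_comm z y, dist_comm y y', dist_comm y' y, hdx, hdy, h1]

lemma exists_proj {E : Set M} (hcl : IsClosed E) (hne : E.Nonempty)
    (hconv : ∀ x ∈ E, ∀ y ∈ E, seg h x y ⊆ E) (a : M) :
    ∃ p ∈ E, dist a p = infDist a E ∧ ∀ e ∈ E, p ∈ seg h a e := by
  obtain ⟨e₀, he₀⟩ := hne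
  obtain ⟨γ, hiso, h0, hl, him⟩ := seg_param h a e₀
  set ℓ := dist a e₀ with hld
  have hℓ0 : (0:ℝ) ≤ ℓ := dist_nonneg
  set S := Icc 0 ℓ ∩ γ ⁻¹' E with hS
  have hSl : ℓ ∈ S := ⟨⟨hℓ0, le_refl _⟩, by rw [mem_preimage, hl]; exact he₀⟩
  have hSc : IsClosed S :=
    (isomLike_continuousOn hiso).preimage_isClosed_of_isClosed isClosed_Icc hcl
  have hSb : BddBelow S := BddBelow.mono inter_subset_left bddBelow_Icc
  set t₀ := sInf S with ht₀def
  have ht₀ : t₀ ∈ S := hSc.csInf_mem ⟨ℓ, hSl⟩ hSb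
  set p := γ t₀ with hp
  have hpE : p ∈ E := ht₀.2
  have hdap : dist a p = t₀ := by
    have := hiso 0 ⟨le_refl _, hℓ0⟩ t₀ ht₀.1
    rw [h0] at this
    rw [hp, this, zero_sub, abs_neg, abs_of_nonneg ht₀.1.1]
  have hDle : infDist a E ≤ t₀ := hdap ▸ infDist_le_dist_of_mem hpE
  have hkey : ∀ e ∈ E, t₀ ≤ dist a e := by
    intro e he
    obtain ⟨m, hme0, hme, hdec⟩ := median h a e₀ e
    have hmE : m ∈ E := hconv e₀ he₀ e he (hdec ▸ Or.inl (right_mem_seg h e₀ m))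
    have hmim : m ∈ γ '' Icc 0 ℓ := him ▸ hme0
    obtain ⟨s, hs, rfl⟩ := hmim
    have hsS : s ∈ S := ⟨hs, hmE⟩
    have h1 : t₀ ≤ s := csInf_le hSb hsS
    have h2 : dist a (γ s) = s := by
      have := hiso 0 ⟨le_refl _, hℓ0⟩ s hs
      rw [h0] at this
      rw [this, zero_sub, abs_neg, abs_of_nonneg hs.1]
    have h3 := dist_add_of_mem_seg h hme
    linarith [(dist_nonneg : (0:ℝ) ≤ dist (γ s) e)]
  have ht₀le : t₀ ≤ infDist a E := by
    by_contra hlt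
    push_neg at hlt
    obtain ⟨e, he, hde⟩ := (infDist_lt_iff ⟨e₀, he₀⟩).mp hlt
    exact absurd (hkey e he) (not_le.mpr hde)
  have hD : dist a p = infDist a E := by rw [hdap]; linarith
  refine ⟨p, hpE, hD, ?_⟩
  intro e he
  obtain ⟨m, hmap, hmae, hdec⟩ := median h a p e
  have hmE : m ∈ E := hconv p hpE e he (hdec ▸ Or.inl (right_mem_seg h p m))
  have h5 := dist_add_of_mem_seg h hmap
  have h6 : infDist a E ≤ dist a m := infDist_le_dist_of_mem hmE
  have h7 : dist m p = 0 := by linarith [(dist_nonneg : (0:ℝ) ≤ dist m p)]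
  have hmp : m = p := by rwa [dist_eq_zero] at h7
  exact hmp ▸ hmae

end API3

section API4
variable {M : Type*} [MetricSpace M] (h : IsRTree M)

/-- The subtree spanned by a set: union of all segments between its points. -/
def ESpan (h : IsRTree M) (S : Set M) : Set M := ⋃ s ∈ S, ⋃ t ∈ S, seg h s t

lemma seg_subset_eSpan {S : Set M} {s t : M} (hs : s ∈ S) (ht : t ∈ S) :
    seg h s t ⊆ ESpan h S := fun x hx => mem_biUnion hs (mem_biUnion ht hx)

lemma subset_eSpan (S : Set M) : S ⊆ ESpan h S := fun s hs =>
  seg_subset_eSpan h hs hs (left_mem_seg h s s)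

lemma eSpan_convex (S : Set M) :
    ∀ x ∈ ESpan h S, ∀ y ∈ ESpan h S, seg h x y ⊆ ESpan h S := by
  intro x hx y hy
  simp only [ESpan, mem_iUnion, exists_prop] at hx hy
  obtain ⟨s, hs, t, ht, hxm⟩ := hx
  obtain ⟨u, hu, v, hv, hym⟩ := hy
  intro p hp
  rcases seg_subset_union h s x y hp with hp1 | hp2
  · exact seg_subset_eSpan h hs ht (seg_subset_seg h (left_mem_seg h s t) hxm hp1)
  · rcases seg_subset_union h u s y hp2 with hq1 | hq2
    · rw [seg_symm h u s] at hq1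
      exact seg_subset_eSpan h hs hu hq1
    · exact seg_subset_eSpan h hu hv (seg_subset_seg h (left_mem_seg h u v) hym hq2)

end API4


/-- `E` is the smallest closed subtree of `M` containing `A`. -/
def IsSmallestClosedSubtreeContaining {M : Type*} [MetricSpace M]
    (E A : Set M) : Prop :=
  IsClosed E ∧ IsRTree ↥E ∧ A ⊆ E ∧
    ∀ E' : Set M, IsClosed E' → IsRTree ↥E' → A ⊆ E' → E ⊆ E'

/-- Symmetry of the independence relation: if every `a ∈ A` is as
close to `Ē_C` as to `Ē_{B∪C}`, then every `b ∈ B` is as close to `Ē_C` as to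
`Ē_{A∪C}`. -/
theorem statement_13 {M : Type*} [MetricSpace M] (hM : IsRTree M)
    (A B C : Set M) (hA : A.Nonempty) (hB : B.Nonempty) (hC : C.Nonempty)
    (EBC EAC EC : Set M)
    (hEBC : IsSmallestClosedSubtreeContaining EBC (B ∪ C))
    (hEAC : IsSmallestClosedSubtreeContaining EAC (A ∪ C))
    (hEC : IsSmallestClosedSubtreeContaining EC C)
    (hind : ∀ a ∈ A, Metric.infDist a EBC = Metric.infDist a EC) :
    ∀ b ∈ B, Metric.infDist b EAC = Metric.infDist b EC := by
  intro b hb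
  obtain ⟨hclBC, htreeBC, hsubBC, hminBC⟩ := hEBC
  obtain ⟨hclAC, htreeAC, hsubAC, hminAC⟩ := hEAC
  obtain ⟨hclC, htreeC, hsubC, hminC⟩ := hEC
  have hconvBC := convex_of_isRTree hM htreeBC
  have hconvC := convex_of_isRTree hM htreeC
  have hCBC : EC ⊆ EBC := hminC EBC hclBC htreeBC (subset_union_right.trans hsubBC)
  have hCAC : EC ⊆ EAC := hminC EAC hclAC htreeAC (subset_union_right.trans hsubAC)
  have hECne : EC.Nonempty := hC.mono hsubC
  have hEBCne : EBC.Nonempty := hECne.mono hCBC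
  have hle : infDist b EAC ≤ infDist b EC := infDist_le_infDist_of_subset hCAC hECne
  have hbBC : b ∈ EBC := hsubBC (Or.inl hb)
  have key : ∀ a ∈ A, ∀ c ∈ EC, ∀ x ∈ seg hM a c, infDist b EC ≤ dist b x := by
    intro a ha c hcEC x hx
    obtain ⟨p, hpBC, hpd, hpseg⟩ := exists_proj hM hclBC hEBCne hconvBC a
    obtain ⟨q, hqC, hqd, -⟩ := exists_proj hM hclC hECne hconvC a
    have hpq : p ∈ seg hM a q := hpseg q (hCBC hqC)
    have h1 := dist_add_of_mem_seg hM hpq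
    have h2 : dist a q = dist a p := by rw [hqd, hpd, hind a ha]
    have hpq0 : dist p q = 0 := by linarith
    have hpEC : p ∈ EC := by
      have hpe : p = q := dist_eq_zero.mp hpq0
      rw [hpe]; exact hqC
    have hpac : p ∈ seg hM a c := hpseg c (hCBC hcEC)
    have hx' : x ∈ seg hM a p ∪ seg hM p c := by
      rw [← seg_decomp hM hpac]; exact hx
    rcases hx' with hx1 | hx2
    · have hpab : p ∈ seg hM a b := hpseg b hbBC
      have hxab : x ∈ seg hM a b := seg_subset_seg hM (left_mem_seg hM a b) hpab hx1
      have d1 := dist_add_of_mem_seg hM hxab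
      have d2 := dist_add_of_mem_seg hM hpab
      have d3 := dist_add_of_mem_seg hM hx1
      have h4 : infDist b EC ≤ dist b p := infDist_le_dist_of_mem hpEC
      linarith [dist_comm b p, dist_comm b x, (dist_nonneg : (0:ℝ) ≤ dist x p)]
    · exact infDist_le_dist_of_mem (hconvC p hpEC c hcEC hx2)
  have keyAll : ∀ x ∈ ESpan hM (A ∪ C), infDist b EC ≤ dist b x := by
    intro x hx
    simp only [ESpan, mem_iUnion, exists_prop] at hx
    obtain ⟨s, hs, t, ht, hx⟩ := hx
    rcases hs with hsA | hsC
    · rcases ht with htA | htC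
      · obtain ⟨c0, hc0⟩ := hC
        have hc0EC : c0 ∈ EC := hsubC hc0
        rcases seg_subset_union hM c0 s t hx with h1 | h1
        · rw [seg_symm hM c0 s] at h1
          exact key s hsA c0 hc0EC x h1
        · rw [seg_symm hM c0 t] at h1
          exact key t htA c0 hc0EC x h1
      · exact key s hsA t (hsubC htC) x hx
    · rcases ht with htA | htC
      · rw [seg_symm hM s t] at hx
        exact key t htA s (hsubC hsC) x hx
      · exact infDist_le_dist_of_mem (hconvC s (hsubC hsC) t (hsubC htC) hx)
  have hspconv := eSpan_convex hM (A ∪ C)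
  have hclosed : IsClosed (closure (ESpan hM (A ∪ C))) := isClosed_closure
  have htree' : IsRTree ↥(closure (ESpan hM (A ∪ C))) :=
    isRTree_of_closed_convex hM hclosed (closure_convex hM hspconv)
  have hsub' : A ∪ C ⊆ closure (ESpan hM (A ∪ C)) :=
    (subset_eSpan hM _).trans subset_closure
  have hACsub : EAC ⊆ closure (ESpan hM (A ∪ C)) := hminAC _ hclosed htree' hsub'
  have keyClosure : ∀ x ∈ EAC, infDist b EC ≤ dist b x := by
    intro x hx
    have hcl2 : IsClosed {y : M | infDist b EC ≤ dist b y} :=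
      isClosed_le continuous_const (continuous_const.dist continuous_id)
    exact closure_minimal (fun y hy => keyAll y hy) hcl2 (hACsub hx)
  have hge : infDist b EC ≤ infDist b EAC := by
    by_contra hlt
    push_neg at hlt
    have hACne : EAC.Nonempty := hECne.mono hCAC
    obtain ⟨x, hxAC, hdx⟩ := (infDist_lt_iff hACne).mp hlt
    exact absurd (keyClosure x hxAC) (not_le.mpr hdx)
  linarith
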